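/- Not every integer between 2m−1 and 2^m−1 is attained as ∑_{i ∈ V(G)} (2^{deg(i)} − 1) − m for a connected graph G with m edges: for m = 4, the set of attained values is exactly {7, 8, 9, 10, 15}. -/

import Mathlib

open Finset

set_option maxRecDepth 4000

section Helpers

variable {V : Type} [Fintype V] [DecidableEq V] (G : SimpleGraph V)

omit [Fintype V] [DecidableEq V] in
private lemma exists_parent (hc : G.Connected) (r v : V) (hv : v ≠ r) :
    ∃ u, G.Adj v u ∧ G.dist r u < G.dist r v := by
  obtain ⟨p, hp⟩ := hc.exists_walk_length_eq_dist r v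
  have hd : 0 < G.dist r v := hc.pos_dist_of_ne (Ne.symm hv)
  set q := p.reverse with hq
  have hql : q.length = G.dist r v := by
    rw [hq, SimpleGraph.Walk.length_reverse, hp]
  have hnil : ¬ q.Nil := by
    rw [SimpleGraph.Walk.not_nil_iff_lt_length]; omega
  refine ⟨q.getVert 1, q.adj_snd hnil, ?_⟩
  have h2 : G.dist (q.getVert 1) r ≤ q.tail.length := SimpleGraph.dist_le _
  have h3 : q.tail.length + 1 = q.length := SimpleGraph.Walk.length_tail_add_one hnil
  have h4 : G.dist r (q.getVert 1) = G.dist (q.getVert 1) r := SimpleGraph.dist_comm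
  omega

private lemma card_bound [DecidableRel G.Adj] (hc : G.Connected) :
    Fintype.card V ≤ G.edgeFinset.card + 1 := by
  classical
  obtain ⟨r⟩ := hc.nonempty
  have H : ∀ v : V, ∃ u, v ≠ r → (G.Adj v u ∧ G.dist r u < G.dist r v) := by
    intro v
    by_cases hv : v = r
    · exact ⟨r, fun h => absurd hv h⟩
    · obtain ⟨u, h1, h2⟩ := exists_parent G hc r v hv
      exact ⟨u, fun _ => ⟨h1, h2⟩⟩
  choose pa hpa using H
  have hcard : (Finset.univ.erase r).card ≤ G.edgeFinset.card := by
    apply Finset.card_le_card_of_injOn (fun v => s(v, pa v))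
    · intro v hv
      simp only [Finset.mem_coe, Finset.mem_erase, Finset.mem_univ, and_true] at hv
      rw [Finset.mem_coe, SimpleGraph.mem_edgeFinset, SimpleGraph.mem_edgeSet]
      exact (hpa v hv).1
    · intro v hv w hw heq
      simp only [Finset.coe_erase, Set.mem_diff, Set.mem_singleton_iff] at hv hw
      by_contra hne
      rw [Sym2.eq_iff] at heq
      rcases heq with ⟨h1, h2⟩ | ⟨h1, h2⟩
      · exact hne h1
      · have l1 := (hpa v hv.2).2
        have l2 := (hpa w hw.2).2
        rw [h2] at l1
        rw [← h1] at l2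
        omega
  have hce : (Finset.univ.erase r).card = Fintype.card V - 1 := by
    rw [Finset.card_erase_of_mem (Finset.mem_univ r), Finset.card_univ]
  have hpos : 0 < Fintype.card V := Fintype.card_pos_iff.mpr ⟨r⟩
  omega

private lemma degree_ge_one [DecidableRel G.Adj] (hc : G.Connected)
    (h2 : 2 ≤ Fintype.card V) (v : V) : 1 ≤ G.degree v := by
  obtain ⟨w, hw⟩ := Fintype.exists_ne_of_one_lt_card h2 v
  obtain ⟨u, hu, -⟩ := exists_parent G hc w v (Ne.symm hw)
  exact (G.degree_pos_iff_exists_adj v).mpr ⟨u, hu⟩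

private lemma adj_all [DecidableRel G.Adj] {a : V}
    (hdeg : G.degree a = Fintype.card V - 1) {w : V} (hwa : w ≠ a) : G.Adj a w := by
  have hsub : G.neighborFinset a ⊆ Finset.univ.erase a := by
    intro x hx
    rw [Finset.mem_erase]
    exact ⟨((G.mem_neighborFinset a x).mp hx).ne', Finset.mem_univ x⟩
  have hcards : (Finset.univ.erase a).card ≤ (G.neighborFinset a).card := by
    rw [Finset.card_erase_of_mem (Finset.mem_univ a), Finset.card_univ,
      G.card_neighborFinset_eq_degree, hdeg]
  have heq := Finset.eq_of_subset_of_card_le hsub hcards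
  rw [← G.mem_neighborFinset, heq, Finset.mem_erase]
  exact ⟨hwa, Finset.mem_univ w⟩

end Helpers

private lemma L2 : ∀ f : Fin 2 → Fin 2, (∑ i, (f i).1) ≠ 8 := by decide

private lemma L3 : ∀ f : Fin 3 → Fin 3, (∑ i, (f i).1) ≠ 8 := by decide

private lemma L4 : ∀ f : Fin 4 → Fin 4, (∀ i, 1 ≤ (f i).1) → (∑ i, (f i).1) = 8 →
    (∑ i, 2 ^ (f i).1) = 18 ∨ (∑ i, 2 ^ (f i).1) = 16 ∨
      (∃ i j, i ≠ j ∧ (f i).1 = 3 ∧ (f j).1 = 3) := by decide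

private lemma L5 : ∀ a b c d e : Fin 5, 1 ≤ a.1 → 1 ≤ b.1 → 1 ≤ c.1 → 1 ≤ d.1 → 1 ≤ e.1 →
    a.1 + b.1 + c.1 + d.1 + e.1 = 8 →
    2^a.1 + 2^b.1 + 2^c.1 + 2^d.1 + 2^e.1 = 24 ∨
    2^a.1 + 2^b.1 + 2^c.1 + 2^d.1 + 2^e.1 = 18 ∨
    2^a.1 + 2^b.1 + 2^c.1 + 2^d.1 + 2^e.1 = 16 := by decide

/-- path on 5 vertices -/
private def g7 : SimpleGraph (Fin 5) := SimpleGraph.fromRel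
  (fun a b => (a = 0 ∧ b = 1) ∨ (a = 1 ∧ b = 2) ∨ (a = 2 ∧ b = 3) ∨ (a = 3 ∧ b = 4))

private instance : DecidableRel g7.Adj := fun a b =>
  decidable_of_iff' _ (SimpleGraph.fromRel_adj _ a b)

/-- 4-cycle -/
private def g8 : SimpleGraph (Fin 4) := SimpleGraph.fromRel
  (fun a b => (a = 0 ∧ b = 1) ∨ (a = 1 ∧ b = 2) ∨ (a = 2 ∧ b = 3) ∨ (a = 3 ∧ b = 0))

private instance : DecidableRel g8.Adj := fun a b =>
  decidable_of_iff' _ (SimpleGraph.fromRel_adj _ a b)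

/-- spider -/
private def g9 : SimpleGraph (Fin 5) := SimpleGraph.fromRel
  (fun a b => (a = 0 ∧ b = 1) ∨ (a = 0 ∧ b = 2) ∨ (a = 0 ∧ b = 3) ∨ (a = 3 ∧ b = 4))

private instance : DecidableRel g9.Adj := fun a b =>
  decidable_of_iff' _ (SimpleGraph.fromRel_adj _ a b)

/-- paw -/
private def g10 : SimpleGraph (Fin 4) := SimpleGraph.fromRel
  (fun a b => (a = 0 ∧ b = 1) ∨ (a = 1 ∧ b = 2) ∨ (a = 0 ∧ b = 2) ∨ (a = 2 ∧ b = 3))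

private instance : DecidableRel g10.Adj := fun a b =>
  decidable_of_iff' _ (SimpleGraph.fromRel_adj _ a b)

/-- star -/
private def g15 : SimpleGraph (Fin 5) := SimpleGraph.fromRel
  (fun a b => (a = 0 ∧ b = 1) ∨ (a = 0 ∧ b = 2) ∨ (a = 0 ∧ b = 3) ∨ (a = 0 ∧ b = 4))

private instance : DecidableRel g15.Adj := fun a b =>
  decidable_of_iff' _ (SimpleGraph.fromRel_adj _ a b)

theorem stmt7 :
    (∀ (V : Type) (_ : Fintype V) (_ : DecidableEq V) (G : SimpleGraph V)
        (_ : DecidableRel G.Adj), G.Connected → G.edgeFinset.card = 4 →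
        (∑ i : V, ((2 : ℤ) ^ G.degree i - 1)) - 4 ∈
          ({7, 8, 9, 10, 15} : Set ℤ)) ∧
    (∀ r ∈ ({7, 8, 9, 10, 15} : Set ℤ),
      ∃ (V : Type) (_ : Fintype V) (_ : DecidableEq V) (G : SimpleGraph V)
        (_ : DecidableRel G.Adj), G.Connected ∧ G.edgeFinset.card = 4 ∧
        (∑ i : V, ((2 : ℤ) ^ G.degree i - 1)) - 4 = r) := by
  constructor
  · intro V _ _ G _ hc hcard
    classical
    -- basic facts
    have hsum : ∑ v, G.degree v = 8 := by
      rw [SimpleGraph.sum_degrees_eq_twice_card_edges, hcard]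
    have hub : ∀ v, G.degree v < Fintype.card V := G.degree_lt_card_verts
    have hn5 : Fintype.card V ≤ 5 := by
      have := card_bound G hc
      omega
    have hex : ∃ a b : V, G.Adj a b := by
      have hne : G.edgeFinset.Nonempty := by
        rw [← Finset.card_pos, hcard]; norm_num
      obtain ⟨e, he⟩ := hne
      induction e using Sym2.ind with
      | _ a b =>
        refine ⟨a, b, ?_⟩
        rwa [SimpleGraph.mem_edgeFinset, SimpleGraph.mem_edgeSet] at he
    obtain ⟨a0, b0, hab0⟩ := hex
    have hn2 : 2 ≤ Fintype.card V :=
      Fintype.one_lt_card_iff_nontrivial.mpr ⟨⟨a0, b0, hab0.ne⟩⟩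
    have hlb : ∀ v, 1 ≤ G.degree v := degree_ge_one G hc hn2
    simp only [Set.mem_insert_iff, Set.mem_singleton_iff]
    -- case on the number of vertices
    have hcases : Fintype.card V = 2 ∨ Fintype.card V = 3 ∨ Fintype.card V = 4 ∨
        Fintype.card V = 5 := by omega
    rcases hcases with hk | hk | hk | hk
    · -- 2 vertices: impossible
      exfalso
      obtain e := Fintype.equivFinOfCardEq hk
      have htrans : ∑ i : Fin 2, G.degree (e.symm i) = ∑ v, G.degree v :=
        Fintype.sum_equiv e.symm _ _ (fun i => rfl)
      exact L2 (fun i => ⟨G.degree (e.symm i), by have := hub (e.symm i); omega⟩) (by rw [htrans, hsum])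
    · -- 3 vertices: impossible
      exfalso
      obtain e := Fintype.equivFinOfCardEq hk
      have htrans : ∑ i : Fin 3, G.degree (e.symm i) = ∑ v, G.degree v :=
        Fintype.sum_equiv e.symm _ _ (fun i => rfl)
      exact L3 (fun i => ⟨G.degree (e.symm i), by have := hub (e.symm i); omega⟩) (by rw [htrans, hsum])
    · -- 4 vertices
      obtain e := Fintype.equivFinOfCardEq hk
      set d : Fin 4 → ℕ := fun i => G.degree (e.symm i) with hd
      have htransN : ∑ i : Fin 4, d i = ∑ v, G.degree v :=
        Fintype.sum_equiv e.symm _ _ (fun i => rfl)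
      have key := L4 (fun i => ⟨d i, by show G.degree (e.symm i) < 4; have := hub (e.symm i); omega⟩) (fun i => hlb _) (by rw [htransN, hsum])
      simp only at key
      have hgoal : ∑ i : V, ((2:ℤ) ^ G.degree i - 1)
          = (∑ i : Fin 4, (2:ℤ) ^ d i) - 4 := by
        rw [← Fintype.sum_equiv e.symm (fun i => ((2:ℤ) ^ d i - 1))
          (fun v => ((2:ℤ) ^ G.degree v - 1)) (fun i => rfl)]
        rw [Finset.sum_sub_distrib]
        simp
      rcases key with h | h | ⟨i, j, hij, h3i, h3j⟩
      · have h' : (∑ i : Fin 4, (2:ℤ) ^ d i) = 18 := by exact_mod_cast h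
        right; right; right; left
        rw [hgoal, h']; norm_num
      · have h' : (∑ i : Fin 4, (2:ℤ) ^ d i) = 16 := by exact_mod_cast h
        right; left
        rw [hgoal, h']; norm_num
      · -- excluded case: two vertices of degree 3 in a 4-vertex graph
        exfalso
        set a := e.symm i with ha
        set b := e.symm j with hb
        have hab : a ≠ b := fun h => hij (e.symm.injective h)
        have hdega : G.degree a = Fintype.card V - 1 := by rw [hk]; exact h3i
        have hdegb : G.degree b = Fintype.card V - 1 := by rw [hk]; exact h3j
        have h2le : ∀ v ∈ Finset.univ.erase a, 2 ≤ G.degree v := by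
          intro v hv
          rw [Finset.mem_erase] at hv
          by_cases hvb : v = b
          · rw [hvb, hdegb, hk]; norm_num
          · have hsub : ({a, b} : Finset V) ⊆ G.neighborFinset v := by
              intro x hx
              rw [Finset.mem_insert, Finset.mem_singleton] at hx
              rw [SimpleGraph.mem_neighborFinset]
              rcases hx with rfl | rfl
              · exact (adj_all G hdega hv.1).symm
              · exact (adj_all G hdegb hvb).symm
            have := Finset.card_le_card hsub
            rwa [Finset.card_pair hab, G.card_neighborFinset_eq_degree] at this
        have hsplit : G.degree a + ∑ v ∈ Finset.univ.erase a, G.degree v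
            = ∑ v, G.degree v := Finset.add_sum_erase Finset.univ (fun v => G.degree v) (Finset.mem_univ a)
        have hrest : (Finset.univ.erase a).card * 2 ≤ ∑ v ∈ Finset.univ.erase a, G.degree v :=
          Finset.card_nsmul_le_sum _ _ _ h2le
        have hce : (Finset.univ.erase a).card = 3 := by
          rw [Finset.card_erase_of_mem (Finset.mem_univ a), Finset.card_univ, hk]
        omega
    · -- 5 vertices
      obtain e := Fintype.equivFinOfCardEq hk
      set d : Fin 5 → ℕ := fun i => G.degree (e.symm i) with hd
      have htransN : ∑ i : Fin 5, d i = ∑ v, G.degree v :=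
        Fintype.sum_equiv e.symm _ _ (fun i => rfl)
      rw [Fin.sum_univ_five, hsum] at htransN
      have hdlt : ∀ i, d i < 5 := fun i => by show G.degree (e.symm i) < 5; have := hub (e.symm i); omega
      have key := L5 ⟨d 0, hdlt 0⟩ ⟨d 1, hdlt 1⟩ ⟨d 2, hdlt 2⟩
        ⟨d 3, hdlt 3⟩ ⟨d 4, hdlt 4⟩
        (hlb _) (hlb _) (hlb _) (hlb _) (hlb _) htransN
      simp only at key
      have hgoal : ∑ i : V, ((2:ℤ) ^ G.degree i - 1)
          = (∑ i : Fin 5, (2:ℤ) ^ d i) - 5 := by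
        rw [← Fintype.sum_equiv e.symm (fun i => ((2:ℤ) ^ d i - 1))
          (fun v => ((2:ℤ) ^ G.degree v - 1)) (fun i => rfl)]
        rw [Finset.sum_sub_distrib]
        simp
      have hexp : (∑ i : Fin 5, (2:ℤ) ^ d i)
          = 2^(d 0) + 2^(d 1) + 2^(d 2) + 2^(d 3) + 2^(d 4) := Fin.sum_univ_five _
      rcases key with h | h | h
      · have h' : ((2:ℤ)^(d 0) + 2^(d 1) + 2^(d 2) + 2^(d 3) + 2^(d 4)) = 24 := by
          exact_mod_cast h
        right; right; right; right
        rw [hgoal, hexp, h']; norm_num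
      · have h' : ((2:ℤ)^(d 0) + 2^(d 1) + 2^(d 2) + 2^(d 3) + 2^(d 4)) = 18 := by
          exact_mod_cast h
        right; right; left
        rw [hgoal, hexp, h']; norm_num
      · have h' : ((2:ℤ)^(d 0) + 2^(d 1) + 2^(d 2) + 2^(d 3) + 2^(d 4)) = 16 := by
          exact_mod_cast h
        left
        rw [hgoal, hexp, h']; norm_num
  · intro r hr
    simp only [Set.mem_insert_iff, Set.mem_singleton_iff] at hr
    rcases hr with rfl | rfl | rfl | rfl | rfl
    · exact ⟨Fin 5, inferInstance, inferInstance, g7, inferInstance,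
        by rw [SimpleGraph.connected_iff]; exact ⟨by decide, inferInstance⟩,
        by decide, by decide⟩
    · exact ⟨Fin 4, inferInstance, inferInstance, g8, inferInstance,
        by rw [SimpleGraph.connected_iff]; exact ⟨by decide, inferInstance⟩,
        by decide, by decide⟩
    · exact ⟨Fin 5, inferInstance, inferInstance, g9, inferInstance,
        by rw [SimpleGraph.connected_iff]; exact ⟨by decide, inferInstance⟩,
        by decide, by decide⟩
    · exact ⟨Fin 4, inferInstance, inferInstance, g10, inferInstance,
        by rw [SimpleGraph.connected_iff]; exact ⟨by decide, inferInstance⟩,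
        by decide, by decide⟩
    · exact ⟨Fin 5, inferInstance, inferInstance, g15, inferInstance,
        by rw [SimpleGraph.connected_iff]; exact ⟨by decide, inferInstance⟩,
        by decide, by decide⟩
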